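/- arXiv:2202.03145 — 7 statements merged into one kernel-verified Lean document; each statement's English description precedes it below -/
import Mathlib

section
/- Let I ⊆ ℝ be an interval containing 0 and let m ∈ (0,1]. Let x₁, …, xₙ ∈ I and let w₁, …, wₙ ∈ [0,1] with ∑_{k=1}^n w_k = 1. If φ : I → ℝ is m-convex, then φ(m ∑_{k=1}^n w_k x_k) ≤ m ∑_{k=1}^n w_k φ(x_k). -/
/-- Discrete Jensen-type inequality for m-convex functions (Theorem 3.2 of PAA):
if `I` is an interval containing `0`, `m ∈ (0,1]`, `∑ wₖ xₖ` is a convex combination of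
points of `I`, and `φ` is `m`-convex on `I`, then `φ(m ∑ wₖ xₖ) ≤ m ∑ wₖ φ(xₖ)`. -/
theorem jensen_mconvex_discrete
    (I : Set ℝ) (hI : I.OrdConnected) (h0 : (0 : ℝ) ∈ I)
    (m : ℝ) (hm : m ∈ Set.Ioc (0 : ℝ) 1)
    (n : ℕ) (x : Fin n → ℝ) (hx : ∀ k, x k ∈ I)
    (w : Fin n → ℝ) (hw : ∀ k, w k ∈ Set.Icc (0 : ℝ) 1) (hw1 : ∑ k, w k = 1)
    (φ : ℝ → ℝ)
    (hφ : ∀ x ∈ I, ∀ y ∈ I, ∀ t ∈ Set.Icc (0 : ℝ) 1,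
      φ (t * x + m * (1 - t) * y) ≤ t * φ x + m * (1 - t) * φ y) :
    φ (m * ∑ k, w k * x k) ≤ m * ∑ k, w k * φ (x k) := by
  obtain ⟨hm0, hm1⟩ := hm
  have hconv : Convex ℝ I := hI.convex
  have hmul : ∀ a ∈ I, m * a ∈ I := by
    intro a ha
    have h' : m • a + (1 - m) • (0:ℝ) ∈ I := hconv ha h0 hm0.le (by linarith) (by ring)
    simpa using h'
  induction n with
  | zero => simp at hw1
  | succ n ih =>
    set t := w (Fin.last n) with ht
    set s := ∑ k : Fin n, w (Fin.castSucc k) with hsdef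
    have hst : s + t = 1 := by
      rw [hsdef, ht, ← Fin.sum_univ_castSucc]; exact hw1
    have hs0 : 0 ≤ s := Finset.sum_nonneg fun k _ => (hw _).1
    have ht0 : 0 ≤ t := (hw _).1
    have hs1 : s ≤ 1 := by linarith
    have hxlast : φ (m * x (Fin.last n)) ≤ m * φ (x (Fin.last n)) := by
      have := hφ 0 h0 (x (Fin.last n)) (hx _) 0 ⟨le_refl _, zero_le_one⟩
      simpa using this
    by_cases hs : s = 0
    · -- all the first n weights vanish
      have hwz : ∀ k : Fin n, w (Fin.castSucc k) = 0 := by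
        intro k
        rw [hsdef] at hs
        exact (Finset.sum_eq_zero_iff_of_nonneg
          (fun j (_ : j ∈ Finset.univ) => (hw (Fin.castSucc j)).1)).mp hs k (Finset.mem_univ k)
      have ht1 : t = 1 := by linarith
      have hwl1 : w (Fin.last n) = 1 := by rw [← ht]; exact ht1
      rw [Fin.sum_univ_castSucc, Fin.sum_univ_castSucc]
      simp only [hwz, zero_mul, Finset.sum_const_zero, zero_add, hwl1, one_mul]
      exact hxlast
    · have hspos : 0 < s := lt_of_le_of_ne hs0 (Ne.symm hs)
      set v : Fin n → ℝ := fun k => w (Fin.castSucc k) / s with hv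
      have hv0 : ∀ k, 0 ≤ v k := fun k => div_nonneg (hw _).1 hs0
      have hwle : ∀ k : Fin n, w (Fin.castSucc k) ≤ s := by
        intro k
        exact Finset.single_le_sum (fun j _ => (hw (Fin.castSucc j)).1) (Finset.mem_univ k)
      have hv1 : ∀ k, v k ≤ 1 := fun k => by
        rw [hv]; exact div_le_one_of_le₀ (hwle k) hs0
      have hvsum : ∑ k, v k = 1 := by
        rw [hv, ← Finset.sum_div, ← hsdef, div_self hs]
      set z := ∑ k : Fin n, v k * x (Fin.castSucc k) with hz
      have hzI : z ∈ I := by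
        have h' : ∑ k : Fin n, v k • x (Fin.castSucc k) ∈ I :=
          hconv.sum_mem (fun k _ => hv0 k) hvsum (fun k _ => hx (Fin.castSucc k))
        simpa [hz] using h'
      have hmzI : m * z ∈ I := hmul z hzI
      have ihz : φ (m * ∑ k, v k * x (Fin.castSucc k)) ≤
          m * ∑ k, v k * φ (x (Fin.castSucc k)) :=
        ih (fun k => x (Fin.castSucc k)) (fun k => hx _)
          v (fun k => ⟨hv0 k, hv1 k⟩)
          hvsum
      have hsz : ∑ k : Fin n, w (Fin.castSucc k) * x (Fin.castSucc k) = s * z := by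
        rw [hz, Finset.mul_sum]
        refine Finset.sum_congr rfl fun k _ => ?_
        rw [hv]; field_simp
      have key := hφ (m * z) hmzI (x (Fin.last n)) (hx _) s ⟨hs0, hs1⟩
      have harg : m * ∑ k : Fin (n+1), w k * x k = s * (m * z) + m * (1 - s) * x (Fin.last n) := by
        rw [Fin.sum_univ_castSucc, mul_add, hsz, ← ht]
        have : t = 1 - s := by linarith
        rw [this]; ring
      rw [harg]
      have hszφ : ∑ k : Fin n, w (Fin.castSucc k) * φ (x (Fin.castSucc k)) =
          s * ∑ k, v k * φ (x (Fin.castSucc k)) := by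
        rw [Finset.mul_sum]
        refine Finset.sum_congr rfl fun k _ => ?_
        rw [hv]; field_simp
      have hφz : s * φ (m * z) ≤ s * (m * ∑ k, v k * φ (x (Fin.castSucc k))) := by
        apply mul_le_mul_of_nonneg_left _ hs0
        rw [hz]; exact ihz
      calc φ (s * (m * z) + m * (1 - s) * x (Fin.last n))
          ≤ s * φ (m * z) + m * (1 - s) * φ (x (Fin.last n)) := key
        _ ≤ s * (m * ∑ k, v k * φ (x (Fin.castSucc k))) + m * (1 - s) * φ (x (Fin.last n)) := by
            linarith
        _ = m * ∑ k : Fin (n+1), w k * φ (x k) := by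
            rw [Fin.sum_univ_castSucc, mul_add, hszφ, ← ht]
            have : t = 1 - s := by linarith
            rw [this]; ring
end

section
/- Let x₁ ≤ x₂ ≤ … ≤ xₙ be real numbers and let w₁, …, wₙ be positive weights with ∑_{k=1}^n w_k = 1. If φ is a convex function on [x₁, xₙ], then φ(x₁ + xₙ − ∑_{k=1}^n w_k x_k) ≤ φ(x₁) + φ(xₙ) − ∑_{k=1}^n w_k φ(x_k). -/
lemma mercer_key {a b y : ℝ} {φ : ℝ → ℝ}
    (hφ : ConvexOn ℝ (Set.Icc a b) φ) (hab : a ≤ b) (hy : y ∈ Set.Icc a b) :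
    φ (a + b - y) ≤ φ a + φ b - φ y := by
  rcases eq_or_lt_of_le hab with h | h
  · subst h
    have hy' : y = a := le_antisymm hy.2 hy.1
    subst hy'
    have h : y + y - y = y := by ring
    rw [h]; linarith
  · set t := (b - y) / (b - a) with ht
    have hba : 0 < b - a := by linarith
    have ht0 : 0 ≤ t := div_nonneg (by linarith [hy.2]) hba.le
    have ht1 : t ≤ 1 := by
      rw [div_le_one hba]; linarith [hy.1]
    have hya : y = t * a + (1 - t) * b := by
      rw [ht]; field_simp; ring
    have hra : a + b - y = (1 - t) * a + t * b := by
      rw [hya]; ring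
    have hma : a ∈ Set.Icc a b := Set.left_mem_Icc.2 hab
    have hmb : b ∈ Set.Icc a b := Set.right_mem_Icc.2 hab
    have h1 := hφ.2 hma hmb ht0 (by linarith : (0:ℝ) ≤ 1 - t) (by ring)
    have h2 := hφ.2 hma hmb (by linarith : (0:ℝ) ≤ 1 - t) ht0 (by ring)
    simp only [smul_eq_mul] at h1 h2
    rw [hra, hya]; linarith

/-- Jensen–Mercer inequality (Theorem 1.2 of Mercer): if `x₀ ≤ x₁ ≤ ⋯ ≤ xₙ`,
the weights `wₖ` are positive and sum to `1`, and `φ` is convex on `[x₀, xₙ]`, then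
`φ(x₀ + xₙ − ∑ wₖ xₖ) ≤ φ(x₀) + φ(xₙ) − ∑ wₖ φ(xₖ)`. -/
theorem jensen_mercer_discrete
    (n : ℕ) (x : Fin (n + 1) → ℝ) (hx : Monotone x)
    (w : Fin (n + 1) → ℝ) (hw : ∀ k, 0 < w k) (hw1 : ∑ k, w k = 1)
    (φ : ℝ → ℝ) (hφ : ConvexOn ℝ (Set.Icc (x 0) (x (Fin.last n))) φ) :
    φ (x 0 + x (Fin.last n) - ∑ k, w k * x k)
      ≤ φ (x 0) + φ (x (Fin.last n)) - ∑ k, w k * φ (x k) := by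
  set a := x 0
  set b := x (Fin.last n)
  have hab : a ≤ b := hx (Fin.zero_le _)
  have hmem : ∀ k, x k ∈ Set.Icc a b :=
    fun k => ⟨hx (Fin.zero_le k), hx (Fin.le_last k)⟩
  have hrmem : ∀ k, a + b - x k ∈ Set.Icc a b := by
    intro k
    obtain ⟨h1, h2⟩ := hmem k
    exact ⟨by linarith, by linarith⟩
  have hsum : a + b - ∑ k, w k * x k = ∑ k, w k • (a + b - x k) := by
    simp only [smul_eq_mul, mul_sub]
    rw [Finset.sum_sub_distrib, ← Finset.sum_mul, hw1]
    ring
  rw [hsum]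
  calc φ (∑ k, w k • (a + b - x k))
      ≤ ∑ k, w k • φ (a + b - x k) :=
        hφ.map_sum_le (fun k _ => (hw k).le) hw1 (fun k _ => hrmem k)
    _ ≤ ∑ k, w k * (φ a + φ b - φ (x k)) := by
        apply Finset.sum_le_sum
        intro k _
        exact mul_le_mul_of_nonneg_left (mercer_key hφ hab (hmem k)) (hw k).le
    _ = φ a + φ b - ∑ k, w k * φ (x k) := by
        simp only [mul_sub]
        rw [Finset.sum_sub_distrib, ← Finset.sum_mul, hw1]
        ring
end

section
/- Let I ⊆ ℝ be an interval containing 0, let x₁, …, xₙ ∈ I with x₁ ≤ x₂ ≤ … ≤ xₙ, and let w₁, …, wₙ be positive weights with ∑_{k=1}^n w_k = 1. If φ is an m-convex function on I with m ∈ (0,1], then φ(m x₁ + m² xₙ − m² ∑_{k=1}^n w_k x_k) ≤ m φ(x₁) + m² φ(xₙ) − m ∑_{k=1}^n w_k φ(m x_k). -/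
/-- Jensen–Mercer-type inequality for m-convex functions: if `I` is an interval
containing `0`, `x₀ ≤ x₁ ≤ ⋯ ≤ xₙ` are points of `I`, the weights `wₖ` are positive and
sum to `1`, and `φ` is `m`-convex on `I` with `m ∈ (0,1]`, then
`φ(m x₀ + m² xₙ − m² ∑ wₖ xₖ) ≤ m φ(x₀) + m² φ(xₙ) − m ∑ wₖ φ(m xₖ)`. -/
theorem jensen_mercer_mconvex_discrete
    (I : Set ℝ) (hI : I.OrdConnected) (h0 : (0 : ℝ) ∈ I)
    (n : ℕ) (x : Fin (n + 1) → ℝ) (hx : ∀ k, x k ∈ I) (hmono : Monotone x)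
    (w : Fin (n + 1) → ℝ) (hw : ∀ k, 0 < w k) (hw1 : ∑ k, w k = 1)
    (m : ℝ) (hm : m ∈ Set.Ioc (0 : ℝ) 1)
    (φ : ℝ → ℝ)
    (hφ : ∀ x ∈ I, ∀ y ∈ I, ∀ t ∈ Set.Icc (0 : ℝ) 1,
      φ (t * x + m * (1 - t) * y) ≤ t * φ x + m * (1 - t) * φ y) :
    φ (m * x 0 + m ^ 2 * x (Fin.last n) - m ^ 2 * ∑ k, w k * x k)
      ≤ m * φ (x 0) + m ^ 2 * φ (x (Fin.last n)) - m * ∑ k, w k * φ (m * x k) := by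
  obtain ⟨hm0, hm1⟩ := hm
  set a := x 0 with ha
  set b := x (Fin.last n) with hb
  have hak : ∀ k, a ≤ x k := fun k => hmono (Fin.zero_le k)
  have hkb : ∀ k, x k ≤ b := fun k => hmono (Fin.le_last k)
  have hab : a ≤ b := hak _
  -- t k : each x k is a convex combination t k • a + (1 - t k) • b
  set t : Fin (n + 1) → ℝ := fun k => if hlt : a < b then (b - x k) / (b - a) else 1 with ht
  have ht01 : ∀ k, t k ∈ Set.Icc (0 : ℝ) 1 := by
    intro k
    simp only [ht]
    split_ifs with hlt
    · constructor
      · exact div_nonneg (by linarith [hkb k]) (by linarith)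
      · rw [div_le_one (by linarith)]
        linarith [hak k]
    · exact ⟨zero_le_one, le_refl 1⟩
  have htx : ∀ k, x k = t k * a + (1 - t k) * b := by
    intro k
    simp only [ht]
    split_ifs with hlt
    · have hne : b - a ≠ 0 := by intro h; linarith
      field_simp
      ring
    · have hba : a = b := le_antisymm hab (not_lt.mp hlt)
      have h1 : x k = b := le_antisymm (hkb k) (hba ▸ hak k)
      rw [h1, ← hba]; ring
  -- m * a ∈ I
  have hma : m * a ∈ I := by
    rcases le_total a 0 with h | h
    · exact hI.out (hx 0) h0 ⟨by nlinarith, by nlinarith⟩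
    · exact hI.out h0 (hx 0) ⟨by nlinarith, by nlinarith⟩
  -- φ (m * a) ≤ m * φ a
  have h1 : φ (m * a) ≤ m * φ a := by
    have := hφ a (hx 0) a (hx 0) 0 ⟨le_refl _, zero_le_one⟩
    have e : (0 : ℝ) * a + m * (1 - 0) * a = m * a := by ring
    rw [e] at this
    linarith
  -- pointwise bound for φ (m * x k)
  have h2 : ∀ k, φ (m * x k) ≤ t k * (m * φ a) + m * (1 - t k) * φ b := by
    intro k
    have := hφ (m * a) hma b (hx (Fin.last n)) (t k) (ht01 k)
    have e : t k * (m * a) + m * (1 - t k) * b = m * x k := by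
      rw [htx k]; ring
    rw [e] at this
    have h0t : 0 ≤ t k := (ht01 k).1
    nlinarith [mul_le_mul_of_nonneg_left h1 h0t]
  set T := ∑ k, w k * t k with hT
  have hT0 : 0 ≤ T := Finset.sum_nonneg fun k _ => mul_nonneg (hw k).le (ht01 k).1
  have hT1 : T ≤ 1 := by
    rw [hT, ← hw1]
    exact Finset.sum_le_sum fun k _ => by nlinarith [(ht01 k).2, hw k]
  have hxbar : ∑ k, w k * x k = T * a + (1 - T) * b := by
    have : ∀ k ∈ Finset.univ, w k * x k = w k * t k * a + (w k - w k * t k) * b := by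
      intro k _
      rw [htx k]; ring
    rw [Finset.sum_congr rfl this]
    simp only [Finset.sum_add_distrib, Finset.sum_sub_distrib, ← Finset.sum_mul, hw1]
    rw [← hT]
  -- main application of m-convexity
  have hmT01 : (1 - m * T) ∈ Set.Icc (0 : ℝ) 1 := by
    constructor <;> nlinarith
  have h3 := hφ (m * a) hma b (hx (Fin.last n)) (1 - m * T) hmT01
  have e3 : (1 - m * T) * (m * a) + m * (1 - (1 - m * T)) * b
      = m * a + m ^ 2 * b - m ^ 2 * ∑ k, w k * x k := by
    rw [hxbar]; ring
  rw [e3] at h3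
  -- sum the pointwise bounds
  have h4 : ∑ k, w k * φ (m * x k) ≤ T * (m * φ a) + m * (1 - T) * φ b := by
    have : ∑ k, w k * φ (m * x k)
        ≤ ∑ k, w k * (t k * (m * φ a) + m * (1 - t k) * φ b) :=
      Finset.sum_le_sum fun k _ => mul_le_mul_of_nonneg_left (h2 k) (hw k).le
    calc ∑ k, w k * φ (m * x k)
        ≤ ∑ k, w k * (t k * (m * φ a) + m * (1 - t k) * φ b) := this
      _ = ∑ k, ((w k * t k) * (m * φ a) + (w k - w k * t k) * (m * φ b)) :=
          Finset.sum_congr rfl fun k _ => by ring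
      _ = (∑ k, w k * t k) * (m * φ a) + ((∑ k, w k) - ∑ k, w k * t k) * (m * φ b) := by
          rw [Finset.sum_add_distrib, ← Finset.sum_mul, ← Finset.sum_mul, Finset.sum_sub_distrib]
      _ = T * (m * φ a) + m * (1 - T) * φ b := by rw [hw1, ← hT]; ring
  nlinarith [mul_le_mul_of_nonneg_left h1 (by nlinarith : (0:ℝ) ≤ 1 - m * T),
    mul_le_mul_of_nonneg_left h4 hm0.le]
end

section
/- Let a ≤ 0 ≤ b be real numbers, let y₁, …, yₙ ∈ [a,b], and let w₁, …, wₙ be positive weights with ∑_{k=1}^n w_k = 1. If φ is a continuous m-convex function on [a,b] with m ∈ (0,1], then φ(m a + m² b − m² ∑_{k=1}^n w_k y_k) ≤ m φ(a) + m² φ(b) − m ∑_{k=1}^n w_k φ(m y_k). -/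
open Finset

section Aux

variable {a b m : ℝ} (ha : a ≤ 0) (hb : 0 ≤ b) (hm : m ∈ Set.Ioc (0 : ℝ) 1)
variable (φ : ℝ → ℝ)
variable (hφ : ∀ x ∈ Set.Icc a b, ∀ y ∈ Set.Icc a b, ∀ t ∈ Set.Icc (0 : ℝ) 1,
      φ (t * x + m * (1 - t) * y) ≤ t * φ x + m * (1 - t) * φ y)

include ha hb hm hφ in
lemma mScale {x : ℝ} (hx : x ∈ Set.Icc a b) : φ (m * x) ≤ m * φ x := by
  have h := hφ a ⟨le_refl a, ha.trans hb⟩ x hx 0 ⟨le_refl 0, zero_le_one⟩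
  simpa using h

include ha hb hm hφ in
lemma mJensen {ι : Type*} (s : Finset ι) (w Q : ι → ℝ) (hw : ∀ i ∈ s, 0 ≤ w i)
    (hQ : ∀ i ∈ s, Q i ∈ Set.Icc a b) (h1 : ∑ i ∈ s, w i = 1) :
    φ (m * ∑ i ∈ s, w i * Q i) ≤ m * ∑ i ∈ s, w i * φ (Q i) := by
  induction s using Finset.cons_induction generalizing w with
  | empty => simp at h1
  | cons j s' hj ih =>
    rw [Finset.sum_cons] at h1
    set t := ∑ i ∈ s', w i with ht
    have htnn : 0 ≤ t := Finset.sum_nonneg fun i hi => hw i (Finset.mem_cons_of_mem hi)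
    have hcnn : 0 ≤ w j := hw j (Finset.mem_cons_self _ _)
    have hQ' : ∀ i ∈ s', Q i ∈ Set.Icc a b := fun i hi => hQ i (Finset.mem_cons_of_mem hi)
    rcases eq_or_lt_of_le htnn with h0 | hpos
    · -- all remaining weights are zero, c = 1
      have hz : ∀ i ∈ s', w i = 0 := by
        intro i hi
        exact (Finset.sum_eq_zero_iff_of_nonneg
          (fun i hi => hw i (Finset.mem_cons_of_mem hi))).1 h0.symm i hi
      have hc1 : w j = 1 := by linarith
      have e1 : ∑ i ∈ Finset.cons j s' hj, w i * Q i = Q j := by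
        rw [Finset.sum_cons, Finset.sum_eq_zero (fun i hi => by rw [hz i hi, zero_mul]), hc1]
        ring
      have e2 : ∑ i ∈ Finset.cons j s' hj, w i * φ (Q i) = φ (Q j) := by
        rw [Finset.sum_cons, Finset.sum_eq_zero (fun i hi => by rw [hz i hi, zero_mul]), hc1]
        ring
      rw [e1, e2]
      exact mScale ha hb hm φ hφ (hQ j (Finset.mem_cons_self _ _))
    · -- renormalize
      set v : ι → ℝ := fun i => w i / t with hv
      have htv : ∀ i ∈ s', t * v i = w i := by
        intro i hi; rw [hv]; field_simp
      have key : ∀ g : ι → ℝ, t * ∑ i ∈ s', v i * g i = ∑ i ∈ s', w i * g i := by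
        intro g
        rw [Finset.mul_sum]
        exact Finset.sum_congr rfl fun i hi => by rw [← mul_assoc, htv i hi]
      have hvnn : ∀ i ∈ s', 0 ≤ v i := fun i hi =>
        div_nonneg (hw i (Finset.mem_cons_of_mem hi)) htnn
      have hv1 : ∑ i ∈ s', v i = 1 := by
        have hsd : ∑ i ∈ s', v i = (∑ i ∈ s', w i) / t := by
          rw [hv, Finset.sum_div]
        rw [hsd, ← ht, div_self hpos.ne']
      have ihv := ih v hvnn hQ' hv1
      set S := ∑ i ∈ s', v i * Q i with hS
      have hSab : S ∈ Set.Icc a b := by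
        constructor
        · calc a = ∑ i ∈ s', v i * a := by rw [← Finset.sum_mul, hv1, one_mul]
            _ ≤ S := Finset.sum_le_sum fun i hi =>
                mul_le_mul_of_nonneg_left (hQ' i hi).1 (hvnn i hi)
        · calc S ≤ ∑ i ∈ s', v i * b := Finset.sum_le_sum fun i hi =>
                mul_le_mul_of_nonneg_left (hQ' i hi).2 (hvnn i hi)
            _ = b := by rw [← Finset.sum_mul, hv1, one_mul]
      have hmS : m * S ∈ Set.Icc a b := by
        constructor
        · nlinarith [hSab.1, hSab.2, hm.1, hm.2]
        · nlinarith [hSab.1, hSab.2, hm.1, hm.2]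
      have ht1 : t ≤ 1 := by linarith
      have hc' : 1 - t = w j := by linarith
      have hmain := hφ (m * S) hmS (Q j) (hQ j (Finset.mem_cons_self _ _)) t ⟨htnn, ht1⟩
      have e3 : t * (m * S) + m * (1 - t) * Q j = m * ∑ i ∈ Finset.cons j s' hj, w i * Q i := by
        rw [Finset.sum_cons, hc']
        linear_combination m * key Q
      rw [e3] at hmain
      have e4 : t * φ (m * S) ≤ m * ∑ i ∈ s', w i * φ (Q i) := by
        have h' : t * φ (m * S) ≤ t * (m * ∑ i ∈ s', v i * φ (Q i)) :=
          mul_le_mul_of_nonneg_left ihv htnn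
        have h'' : t * (m * ∑ i ∈ s', v i * φ (Q i)) = m * ∑ i ∈ s', w i * φ (Q i) := by
          linear_combination m * key (fun i => φ (Q i))
        linarith
      have egoal : m * ∑ i ∈ Finset.cons j s' hj, w i * φ (Q i)
          = m * (w j * φ (Q j)) + m * ∑ i ∈ s', w i * φ (Q i) := by
        rw [Finset.sum_cons]; ring
      have e5 : m * (1 - t) * φ (Q j) = m * (w j * φ (Q j)) := by rw [hc']; ring
      rw [egoal]
      linarith

include ha hb hm hφ in
lemma mercerPt {y : ℝ} (hy : y ∈ Set.Icc a b) :
    φ (a + m * b - m * y) + φ (m * y) ≤ φ a + m * φ b := by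
  rcases eq_or_lt_of_le (ha.trans hb) with hab | hab
  · -- a = b, hence a = b = 0
    have ha0 : a = 0 := le_antisymm ha (hab ▸ hb : (0:ℝ) ≤ a)
    have hb0 : b = 0 := by rw [← hab, ha0]
    have hy0 : y = 0 := le_antisymm (ha0 ▸ hab ▸ hy.2 : y ≤ 0) (ha0 ▸ hy.1)
    have h0 := mScale ha hb hm φ hφ (x := 0) ⟨ha, hb⟩
    rw [mul_zero] at h0
    rw [ha0, hb0, hy0]
    simp only [mul_zero, add_zero, zero_add, sub_zero]
    linarith
  · have hd : 0 < m * b - a := by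
      rcases lt_or_eq_of_le hb with h | h
      · nlinarith [hm.1]
      · nlinarith [hm.1]
    set s := (m * b - m * y) / (m * b - a) with hsdef
    have hs0 : 0 ≤ s := by
      apply div_nonneg _ hd.le
      nlinarith [hy.2, hm.1]
    have hs1 : s ≤ 1 := by
      rw [div_le_one hd]
      nlinarith [hy.1, hm.1, hm.2]
    have hamem : a ∈ Set.Icc a b := ⟨le_refl a, ha.trans hb⟩
    have hbmem : b ∈ Set.Icc a b := ⟨ha.trans hb, le_refl b⟩
    have h1 := hφ a hamem b hbmem s ⟨hs0, hs1⟩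
    have h2 := hφ a hamem b hbmem (1 - s) ⟨by linarith, by linarith⟩
    have e1 : s * a + m * (1 - s) * b = m * y := by
      rw [hsdef]; field_simp; ring
    have e2 : (1 - s) * a + m * (1 - (1 - s)) * b = a + m * b - m * y := by
      rw [hsdef]; field_simp; ring
    rw [e1] at h1
    rw [e2] at h2
    linarith

end Aux

/-- Jensen–Mercer-type inequality for continuous m-convex functions at the endpoints:
if `a ≤ 0 ≤ b`, `y₁, …, yₙ ∈ [a,b]`, the weights `wₖ` are positive and sum to `1`, and
`φ` is a continuous `m`-convex function on `[a,b]` with `m ∈ (0,1]`, then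
`φ(m a + m² b − m² ∑ wₖ yₖ) ≤ m φ(a) + m² φ(b) − m ∑ wₖ φ(m yₖ)`. -/
theorem jensen_mercer_mconvex_endpoints
    (a b : ℝ) (ha : a ≤ 0) (hb : 0 ≤ b)
    (n : ℕ) (y : Fin n → ℝ) (hy : ∀ k, y k ∈ Set.Icc a b)
    (w : Fin n → ℝ) (hw : ∀ k, 0 < w k) (hw1 : ∑ k, w k = 1)
    (m : ℝ) (hm : m ∈ Set.Ioc (0 : ℝ) 1)
    (φ : ℝ → ℝ) (hφc : ContinuousOn φ (Set.Icc a b))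
    (hφ : ∀ x ∈ Set.Icc a b, ∀ y ∈ Set.Icc a b, ∀ t ∈ Set.Icc (0 : ℝ) 1,
      φ (t * x + m * (1 - t) * y) ≤ t * φ x + m * (1 - t) * φ y) :
    φ (m * a + m ^ 2 * b - m ^ 2 * ∑ k, w k * y k)
      ≤ m * φ a + m ^ 2 * φ b - m * ∑ k, w k * φ (m * y k) := by
  set Q : Fin n → ℝ := fun k => a + m * b - m * y k with hQdef
  have hQ : ∀ k ∈ Finset.univ, Q k ∈ Set.Icc a b := by
    intro k _
    constructor
    · have := (hy k).2
      simp only [hQdef]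
      nlinarith [hm.1]
    · have := (hy k).1
      simp only [hQdef]
      nlinarith [hm.1, hm.2]
  have hJ := mJensen ha hb hm φ hφ Finset.univ w Q
    (fun i _ => (hw i).le) hQ hw1
  have hpt : m * ∑ k, w k * Q k = m * a + m ^ 2 * b - m ^ 2 * ∑ k, w k * y k := by
    have h2 : ∑ k, w k * Q k = ∑ k, ((a + m * b) * w k - m * (w k * y k)) :=
      Finset.sum_congr rfl fun k _ => by rw [hQdef]; ring
    rw [h2, Finset.sum_sub_distrib, ← Finset.mul_sum, ← Finset.mul_sum, hw1]
    ring
  rw [hpt] at hJ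
  have hsum : ∑ k, w k * φ (Q k) ≤ ∑ k, w k * (φ a + m * φ b - φ (m * y k)) := by
    refine Finset.sum_le_sum fun k _ => mul_le_mul_of_nonneg_left ?_ (hw k).le
    have := mercerPt ha hb hm φ hφ (hy k)
    simp only [hQdef]
    linarith
  have hexp : ∑ k, w k * (φ a + m * φ b - φ (m * y k))
      = (φ a + m * φ b) * ∑ k, w k - ∑ k, w k * φ (m * y k) := by
    have h3 : ∑ k, w k * (φ a + m * φ b - φ (m * y k))
        = ∑ k, ((φ a + m * φ b) * w k - w k * φ (m * y k)) :=
      Finset.sum_congr rfl fun k _ => by ring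
    rw [h3, Finset.sum_sub_distrib, ← Finset.mul_sum]
  rw [hexp, hw1] at hsum
  have := mul_le_mul_of_nonneg_left hsum hm.1.le
  nlinarith [this, hJ]
end

section
/- Let μ be a probability measure on a measurable space X and let a ≤ 0 ≤ b be real constants. If f : X → [a,b] is a measurable function and φ is a continuous m-convex function on [a,b], with m ∈ (0,1], then f and x ↦ φ(m f(x)) are μ-integrable and φ(m a + m² b − m² ∫_X f dμ) ≤ m φ(a) + m² φ(b) − m ∫_X φ(m f) dμ. -/
open MeasureTheory

/-- Continuous Jensen–Mercer-type inequality for m-convex functions: if `μ` is a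
probability measure on `X`, `a ≤ 0 ≤ b`, `f : X → [a,b]` is measurable, and `φ` is a
continuous `m`-convex function on `[a,b]` with `m ∈ (0,1]`, then `f` and `x ↦ φ(m f(x))`
are `μ`-integrable and
`φ(m a + m² b − m² ∫ f dμ) ≤ m φ(a) + m² φ(b) − m ∫ φ(m f) dμ`. -/
theorem jensen_mercer_mconvex_integral
    {X : Type*} [MeasurableSpace X] (μ : Measure X) [IsProbabilityMeasure μ]
    (a b : ℝ) (ha : a ≤ 0) (hb : 0 ≤ b)
    (f : X → ℝ) (hfm : Measurable f) (hf : ∀ x, f x ∈ Set.Icc a b)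
    (m : ℝ) (hm : m ∈ Set.Ioc (0 : ℝ) 1)
    (φ : ℝ → ℝ) (hφc : ContinuousOn φ (Set.Icc a b))
    (hφ : ∀ x ∈ Set.Icc a b, ∀ y ∈ Set.Icc a b, ∀ t ∈ Set.Icc (0 : ℝ) 1,
      φ (t * x + m * (1 - t) * y) ≤ t * φ x + m * (1 - t) * φ y) :
    Integrable f μ ∧ Integrable (fun x => φ (m * f x)) μ ∧
      φ (m * a + m ^ 2 * b - m ^ 2 * ∫ x, f x ∂μ)
        ≤ m * φ a + m ^ 2 * φ b - m * ∫ x, φ (m * f x) ∂μ := by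
  obtain ⟨hm0, hm1⟩ := hm
  have hab : a ≤ b := le_trans ha hb
  have haI : a ∈ Set.Icc a b := ⟨le_refl a, hab⟩
  have hbI : b ∈ Set.Icc a b := ⟨hab, le_refl b⟩
  have hmem : ∀ z ∈ Set.Icc a b, m * z ∈ Set.Icc a b := by
    rintro z ⟨hz1, hz2⟩
    constructor <;> nlinarith
  -- Key lemma: φ(m(s x + (1-s) y)) ≤ m (s φ(x) + (1-s) φ(y))
  have hA : ∀ x ∈ Set.Icc a b, ∀ y ∈ Set.Icc a b, ∀ s ∈ Set.Icc (0:ℝ) 1,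
      φ (m * (s * x + (1 - s) * y)) ≤ m * (s * φ x + (1 - s) * φ y) := by
    intro x hx y hy s hs
    have h1 : φ (m * x) ≤ m * φ x := by
      have h := hφ x hx x hx 0 ⟨le_refl 0, zero_le_one⟩
      simpa using h
    have h2 := hφ (m * x) (hmem x hx) y hy s hs
    have e : m * (s * x + (1 - s) * y) = s * (m * x) + m * (1 - s) * y := by ring
    rw [e]
    calc φ (s * (m * x) + m * (1 - s) * y)
        ≤ s * φ (m * x) + m * (1 - s) * φ y := h2
      _ ≤ s * (m * φ x) + m * (1 - s) * φ y := by
          have := mul_le_mul_of_nonneg_left h1 hs.1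
          linarith
      _ = m * (s * φ x + (1 - s) * φ y) := by ring
  -- integrability of f
  have hfb : ∀ x, ‖f x‖ ≤ max ‖a‖ ‖b‖ := by
    intro x
    obtain ⟨h1, h2⟩ := hf x
    rw [Real.norm_eq_abs, abs_le]
    constructor
    · have h3 : -|a| ≤ a := neg_abs_le a
      have h4 : |a| ≤ max ‖a‖ ‖b‖ := by
        rw [← Real.norm_eq_abs]; exact le_max_left _ _
      linarith
    · have h3 : b ≤ |b| := le_abs_self b
      have h4 : |b| ≤ max ‖a‖ ‖b‖ := by
        rw [← Real.norm_eq_abs]; exact le_max_right _ _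
      linarith
  have hfint : Integrable f μ :=
    ⟨hfm.aestronglyMeasurable, HasFiniteIntegral.of_bounded (ae_of_all μ hfb)⟩
  -- measurability of x ↦ φ (m * f x)
  have hgm : Measurable (fun x => φ (m * f x)) := by
    have hres : Continuous ((Set.Icc a b).restrict φ) :=
      continuousOn_iff_continuous_restrict.mp hφc
    have heq : (fun x => φ (m * f x)) =
        ((Set.Icc a b).restrict φ) ∘
          (fun x => (⟨m * f x, hmem _ (hf x)⟩ : Set.Icc a b)) := rfl
    rw [heq]
    exact hres.measurable.comp (Measurable.subtype_mk (measurable_const.mul hfm))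
  obtain ⟨K, hK⟩ := (isCompact_Icc (a := a) (b := b)).exists_bound_of_continuousOn hφc
  have hgb : ∀ x, ‖φ (m * f x)‖ ≤ K := fun x => hK _ (hmem _ (hf x))
  have hgint : Integrable (fun x => φ (m * f x)) μ :=
    ⟨hgm.aestronglyMeasurable, HasFiniteIntegral.of_bounded (ae_of_all μ hgb)⟩
  refine ⟨hfint, hgint, ?_⟩
  -- bounds on the integral of f
  have hIa : a ≤ ∫ x, f x ∂μ := by
    have h := integral_mono (integrable_const a) hfint (fun x => (hf x).1)
    simpa using h
  have hIb : (∫ x, f x ∂μ) ≤ b := by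
    have h := integral_mono hfint (integrable_const b) (fun x => (hf x).2)
    simpa using h
  rcases eq_or_lt_of_le hab with heq | hlt
  · -- degenerate case a = b, forcing a = b = 0
    have ha0 : a = 0 := le_antisymm ha (heq ▸ hb)
    have hb0 : b = 0 := heq ▸ ha0
    subst ha0
    subst hb0
    have hf0 : ∀ x, f x = 0 := fun x => le_antisymm (hf x).2 (hf x).1
    have h0 : φ 0 ≤ m * φ 0 := by
      have h := hA 0 ⟨le_refl 0, le_refl 0⟩ 0 ⟨le_refl 0, le_refl 0⟩ 0
        ⟨le_refl 0, zero_le_one⟩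
      simpa using h
    simp only [hf0, mul_zero, integral_zero, integral_const, probReal_univ,
      ENNReal.toReal_one, smul_eq_mul, one_mul, sub_zero]
    have e0 : (0:ℝ) + 0 = 0 := by norm_num
    rw [e0]
    nlinarith [h0, mul_le_mul_of_nonneg_left h0 hm0.le]
  · set I := ∫ x, f x ∂μ with hI
    set J := ∫ x, φ (m * f x) ∂μ with hJ
    have hba : (0:ℝ) < b - a := by linarith
    set T := (b - I) / (b - a) with hT
    have hT0 : 0 ≤ T := div_nonneg (by linarith) hba.le
    have hT1 : T ≤ 1 := by rw [hT, div_le_one hba]; linarith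
    -- pointwise bound on φ(m f x)
    have hpt : ∀ x, φ (m * f x) ≤
        m * ((b - f x) / (b - a) * φ a + (f x - a) / (b - a) * φ b) := by
      intro x
      have ht0 : 0 ≤ (b - f x) / (b - a) := div_nonneg (by linarith [(hf x).2]) hba.le
      have ht1 : (b - f x) / (b - a) ≤ 1 := by
        rw [div_le_one hba]; linarith [(hf x).1]
      have h := hA a haI b hbI ((b - f x) / (b - a)) ⟨ht0, ht1⟩
      have e1 : (b - f x) / (b - a) * a + (1 - (b - f x) / (b - a)) * b = f x := by
        field_simp
        ring
      have e2 : 1 - (b - f x) / (b - a) = (f x - a) / (b - a) := by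
        field_simp
        ring
      rw [e1, e2] at h
      exact h
    have hbint : Integrable
        (fun x => m * ((b - f x) / (b - a) * φ a + (f x - a) / (b - a) * φ b)) μ := by
      apply Integrable.const_mul
      exact ((((integrable_const b).sub hfint).div_const _).mul_const _).add
        (((hfint.sub (integrable_const a)).div_const _).mul_const _)
    have hJle : J ≤ m * (T * φ a + (1 - T) * φ b) := by
      have h := integral_mono hgint hbint hpt
      have hcomp : (∫ x, m * ((b - f x) / (b - a) * φ a + (f x - a) / (b - a) * φ b) ∂μ)
          = m * (T * φ a + (1 - T) * φ b) := by
        have e : (fun x => m * ((b - f x) / (b - a) * φ a + (f x - a) / (b - a) * φ b))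
            = (fun x => m * ((b * φ a - a * φ b) / (b - a))
                + (m * ((φ b - φ a) / (b - a))) * f x) := by
          funext x
          field_simp
          ring
        rw [e, integral_add (integrable_const _) (hfint.const_mul _),
          integral_const, integral_const_mul, probReal_univ]
        simp only [ENNReal.toReal_one, one_smul]
        rw [hT]
        field_simp
        ring
      rw [hcomp] at h
      exact h
    have hs0 : 0 ≤ 1 - m * T := by nlinarith
    have hs1 : 1 - m * T ≤ 1 := by nlinarith
    have hkey := hA a haI b hbI (1 - m * T) ⟨hs0, hs1⟩
    have e3 : m * ((1 - m * T) * a + (1 - (1 - m * T)) * b)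
        = m * a + m ^ 2 * b - m ^ 2 * I := by
      rw [hT]
      field_simp
      ring
    rw [e3] at hkey
    have hmul := mul_le_mul_of_nonneg_left hJle hm0.le
    nlinarith [hkey, hmul]
end

section
/- Let μ be a probability measure on a measurable space X and let a ≤ b be real constants. If f : X → [a,b] is a measurable function and φ is a convex function on [a,b] (not assumed continuous at the endpoints), then f and φ ∘ f are μ-integrable and φ(a + b − ∫_X f dμ) ≤ φ(a) + φ(b) − ∫_X (φ ∘ f) dμ. -/
open MeasureTheory

section Aux

variable {a b : ℝ} {φ : ℝ → ℝ}

private lemma convexOn_Icc_bounds (hab : a ≤ b) (hφ : ConvexOn ℝ (Set.Icc a b) φ) :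
    ∃ K : ℝ, ∀ t ∈ Set.Icc a b, |φ t| ≤ K := by
  set M := max (φ a) (φ b) with hM
  refine ⟨max M (M - 2 * φ ((a + b) / 2)), fun t ht => ?_⟩
  have ha : a ∈ Set.Icc a b := Set.left_mem_Icc.2 hab
  have hb : b ∈ Set.Icc a b := Set.right_mem_Icc.2 hab
  have hub : ∀ s ∈ Set.Icc a b, φ s ≤ M := fun s hs =>
    hφ.le_on_segment ha hb (by rwa [segment_eq_Icc hab])
  have ht' : a + b - t ∈ Set.Icc a b := ⟨by linarith [ht.2], by linarith [ht.1]⟩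
  have hmid : φ ((1/2 : ℝ) • t + (1/2 : ℝ) • (a + b - t)) ≤
      (1/2 : ℝ) • φ t + (1/2 : ℝ) • φ (a + b - t) :=
    hφ.2 ht ht' (by norm_num) (by norm_num) (by norm_num)
  have heq : (1/2 : ℝ) • t + (1/2 : ℝ) • (a + b - t) = (a + b) / 2 := by
    simp only [smul_eq_mul]; ring
  rw [heq, smul_eq_mul, smul_eq_mul] at hmid
  have h1 : φ t ≤ M := hub t ht
  have h2 : φ (a + b - t) ≤ M := hub _ ht'
  rw [abs_le]
  constructor
  · have : 2 * φ ((a + b) / 2) - M ≤ φ t := by linarith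
    have h3 : M - 2 * φ ((a + b) / 2) ≤ max M (M - 2 * φ ((a + b) / 2)) := le_max_right _ _
    linarith
  · exact h1.trans (le_max_left _ _)

private lemma convexOn_comp_measurable {X : Type*} [MeasurableSpace X] (hab : a < b)
    (hφ : ConvexOn ℝ (Set.Icc a b) φ) {f : X → ℝ} (hfm : Measurable f)
    (hf : ∀ x, f x ∈ Set.Icc a b) : Measurable fun x => φ (f x) := by
  classical
  have hcont : ContinuousOn φ (Set.Ioo a b) := by
    have h := hφ.continuousOn_interior
    rwa [interior_Icc] at h
  have hF : Measurable ((Set.Ioo a b).piecewise φ fun _ => (0 : ℝ)) :=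
    hcont.measurable_piecewise continuousOn_const measurableSet_Ioo
  have hkey : (fun x => φ (f x)) = fun x =>
      if f x = a then φ a else if f x = b then φ b
      else (Set.Ioo a b).piecewise φ (fun _ => (0 : ℝ)) (f x) := by
    funext x
    rcases eq_or_ne (f x) a with h | h
    · simp [h]
    · rcases eq_or_ne (f x) b with h2 | h2
      · simp [h, h2, hab.ne']
      · have hm : f x ∈ Set.Ioo a b :=
          ⟨lt_of_le_of_ne (hf x).1 (Ne.symm h), lt_of_le_of_ne (hf x).2 h2⟩
        simp [h, h2, Set.piecewise, hm]
  rw [hkey]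
  refine Measurable.ite (hfm (measurableSet_singleton a)) measurable_const ?_
  exact Measurable.ite (hfm (measurableSet_singleton b)) measurable_const (hF.comp hfm)

private lemma integrable_convexOn_comp {X : Type*} [MeasurableSpace X] (μ : Measure X)
    [IsProbabilityMeasure μ] (hab : a ≤ b) (hφ : ConvexOn ℝ (Set.Icc a b) φ) {f : X → ℝ}
    (hfm : Measurable f) (hf : ∀ x, f x ∈ Set.Icc a b) :
    Integrable (fun x => φ (f x)) μ := by
  rcases eq_or_lt_of_le hab with rfl | hlt
  · have hconst : (fun x => φ (f x)) = fun _ => φ a := by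
      funext x
      have h := hf x
      rw [Set.Icc_self, Set.mem_singleton_iff] at h
      rw [h]
    rw [hconst]; exact integrable_const _
  obtain ⟨K, hK⟩ := convexOn_Icc_bounds hab hφ
  exact (integrable_const K).mono'
    ((convexOn_comp_measurable hlt hφ hfm hf).aestronglyMeasurable)
    (Filter.Eventually.of_forall fun x => by
      simpa [Real.norm_eq_abs] using hK _ (hf x))

private lemma exists_supporting (hφ : ConvexOn ℝ (Set.Icc a b) φ) {m : ℝ}
    (hm : m ∈ Set.Ioo a b) :
    ∃ c : ℝ, ∀ t ∈ Set.Icc a b, φ m + c * (t - m) ≤ φ t := by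
  have hmem : m ∈ Set.Icc a b := ⟨hm.1.le, hm.2.le⟩
  have hamem : a ∈ Set.Icc a b := Set.left_mem_Icc.2 (hm.1.le.trans hm.2.le)
  set S := (fun s => (φ s - φ m) / (s - m)) '' Set.Ioc m b with hS
  have hne : S.Nonempty := ⟨_, ⟨b, ⟨hm.2, le_refl b⟩, rfl⟩⟩
  have hbdd : BddBelow S := by
    refine ⟨(φ a - φ m) / (a - m), ?_⟩
    rintro _ ⟨s, hs, rfl⟩
    exact hφ.secant_mono hmem hamem ⟨hm.1.le.trans hs.1.le, hs.2⟩ hm.1.ne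
      (ne_of_gt hs.1) (hm.1.le.trans hs.1.le)
  refine ⟨sInf S, fun t ht => ?_⟩
  rcases lt_trichotomy t m with h | h | h
  · have hle : (φ t - φ m) / (t - m) ≤ sInf S := by
      refine le_csInf hne ?_
      rintro _ ⟨s, hs, rfl⟩
      exact hφ.secant_mono hmem ht ⟨hm.1.le.trans hs.1.le, hs.2⟩ (ne_of_lt h)
        (ne_of_gt hs.1) (h.le.trans hs.1.le)
    rw [div_le_iff_of_neg (by linarith : t - m < 0)] at hle
    linarith
  · subst h; simp
  · have hle : sInf S ≤ (φ t - φ m) / (t - m) :=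
      csInf_le hbdd ⟨t, ⟨h, ht.2⟩, rfl⟩
    rw [le_div_iff₀ (by linarith : (0:ℝ) < t - m)] at hle
    linarith

private lemma jensen_integral_aux {X : Type*} [MeasurableSpace X] (μ : Measure X)
    [IsProbabilityMeasure μ] (hab : a < b) (hφ : ConvexOn ℝ (Set.Icc a b) φ) {g : X → ℝ}
    (hgm : Measurable g) (hg : ∀ x, g x ∈ Set.Icc a b) :
    φ (∫ x, g x ∂μ) ≤ ∫ x, φ (g x) ∂μ := by
  have hgi : Integrable g μ := by
    refine (integrable_const (max |a| |b|)).mono' hgm.aestronglyMeasurable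
      (Filter.Eventually.of_forall fun x => ?_)
    rw [Real.norm_eq_abs, abs_le]
    constructor
    · linarith [neg_abs_le a, le_max_left |a| |b|, (hg x).1]
    · linarith [le_abs_self b, le_max_right |a| |b|, (hg x).2]
  have hφi : Integrable (fun x => φ (g x)) μ := integrable_convexOn_comp μ hab.le hφ hgm hg
  set m := ∫ x, g x ∂μ with hm
  have hma : a ≤ m := by
    have h := integral_mono (integrable_const a) hgi fun x => (hg x).1
    simpa using h
  have hmb : m ≤ b := by
    have h := integral_mono hgi (integrable_const b) fun x => (hg x).2
    simpa using h
  rcases eq_or_lt_of_le hma with h | h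
  · -- m = a : g = a a.e.
    have h0 : ∫ x, (g x - a) ∂μ = 0 := by
      rw [integral_sub hgi (integrable_const a)]
      simp [← hm, ← h]
    have hae : (fun x => g x - a) =ᵐ[μ] 0 :=
      (integral_eq_zero_iff_of_nonneg (fun x => sub_nonneg.2 (hg x).1)
        (hgi.sub (integrable_const a))).1 h0
    have hint : ∫ x, φ (g x) ∂μ = φ a := by
      rw [integral_congr_ae (hae.mono fun x hx => by
        have : g x = a := by simpa [sub_eq_zero] using hx
        rw [this])]
      simp
    rw [hint, ← h]
  rcases eq_or_lt_of_le hmb with h2 | h2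
  · -- m = b : g = b a.e.
    have h0 : ∫ x, (b - g x) ∂μ = 0 := by
      rw [integral_sub (integrable_const b) hgi]
      simp [← hm, h2]
    have hae : (fun x => b - g x) =ᵐ[μ] 0 :=
      (integral_eq_zero_iff_of_nonneg (fun x => sub_nonneg.2 (hg x).2)
        ((integrable_const b).sub hgi)).1 h0
    have hint : ∫ x, φ (g x) ∂μ = φ b := by
      rw [integral_congr_ae (hae.mono fun x hx => by
        have : g x = b := by
          have := hx
          simp only [Pi.zero_apply, sub_eq_zero] at this
          exact this.symm
        rw [this])]
      simp
    rw [hint, h2]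
  obtain ⟨c, hc⟩ := exists_supporting hφ ⟨h, h2⟩
  have hli2 : Integrable (fun x => c * (g x - m)) μ :=
    Integrable.const_mul (hgi.sub (integrable_const m)) c
  have hli : Integrable (fun x => φ m + c * (g x - m)) μ :=
    (integrable_const (φ m)).add hli2
  have hmono : ∫ x, (φ m + c * (g x - m)) ∂μ ≤ ∫ x, φ (g x) ∂μ :=
    integral_mono hli hφi fun x => hc _ (hg x)
  have heq : ∫ x, (φ m + c * (g x - m)) ∂μ = φ m := by
    rw [integral_add (integrable_const (φ m)) hli2,
      integral_const, integral_const_mul, integral_sub hgi (integrable_const m), integral_const]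
    simp [← hm]
  linarith [hmono, heq.symm ▸ hmono]

private lemma mercer_pointwise (hab : a < b) (hφ : ConvexOn ℝ (Set.Icc a b) φ) {t : ℝ}
    (ht : t ∈ Set.Icc a b) : φ (a + b - t) ≤ φ a + φ b - φ t := by
  set l := (b - t) / (b - a) with hl
  have hba : (0:ℝ) < b - a := by linarith
  have hl0 : 0 ≤ l := div_nonneg (by linarith [ht.2]) hba.le
  have hl1 : 0 ≤ 1 - l := by
    have : l ≤ 1 := div_le_one_of_le₀ (by linarith [ht.1]) hba.le
    linarith
  have ha : a ∈ Set.Icc a b := Set.left_mem_Icc.2 hab.le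
  have hb : b ∈ Set.Icc a b := Set.right_mem_Icc.2 hab.le
  have h1 : φ (l • a + (1 - l) • b) ≤ l • φ a + (1 - l) • φ b :=
    hφ.2 ha hb hl0 hl1 (by ring)
  have h2 : φ ((1 - l) • a + l • b) ≤ (1 - l) • φ a + l • φ b :=
    hφ.2 ha hb hl1 hl0 (by ring)
  simp only [smul_eq_mul] at h1 h2
  have he1 : l * a + (1 - l) * b = t := by
    have hlb : l * (b - a) = b - t := by rw [hl]; exact div_mul_cancel₀ _ hba.ne'
    linear_combination -hlb
  have he2 : (1 - l) * a + l * b = a + b - t := by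
    have hlb : l * (b - a) = b - t := by rw [hl]; exact div_mul_cancel₀ _ hba.ne'
    linear_combination hlb
  rw [he1] at h1
  rw [he2] at h2
  linarith

end Aux

/-- Continuous Jensen–Mercer inequality for convex functions (not assumed continuous at
the endpoints): if `μ` is a probability measure on `X`, `a ≤ b`, `f : X → [a,b]` is
measurable, and `φ` is convex on `[a,b]`, then `f` and `φ ∘ f` are `μ`-integrable and
`φ(a + b − ∫ f dμ) ≤ φ(a) + φ(b) − ∫ φ ∘ f dμ`. -/
theorem jensen_mercer_integral
    {X : Type*} [MeasurableSpace X] (μ : Measure X) [IsProbabilityMeasure μ]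
    (a b : ℝ) (hab : a ≤ b)
    (f : X → ℝ) (hfm : Measurable f) (hf : ∀ x, f x ∈ Set.Icc a b)
    (φ : ℝ → ℝ) (hφ : ConvexOn ℝ (Set.Icc a b) φ) :
    Integrable f μ ∧ Integrable (φ ∘ f) μ ∧
      φ (a + b - ∫ x, f x ∂μ) ≤ φ a + φ b - ∫ x, φ (f x) ∂μ := by
  have hfi : Integrable f μ := by
    refine (integrable_const (max |a| |b|)).mono' hfm.aestronglyMeasurable
      (Filter.Eventually.of_forall fun x => ?_)
    rw [Real.norm_eq_abs, abs_le]
    constructor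
    · linarith [neg_abs_le a, le_max_left |a| |b|, (hf x).1]
    · linarith [le_abs_self b, le_max_right |a| |b|, (hf x).2]
  have hφfi : Integrable (fun x => φ (f x)) μ := integrable_convexOn_comp μ hab hφ hfm hf
  refine ⟨hfi, hφfi, ?_⟩
  rcases eq_or_lt_of_le hab with rfl | hlt
  · have hfa : ∀ x, f x = a := fun x => by
      have h := hf x
      rwa [Set.Icc_self, Set.mem_singleton_iff] at h
    have h1 : ∫ x, f x ∂μ = a := by
      rw [integral_congr_ae (Filter.Eventually.of_forall fun x => hfa x)]
      simp
    have h2 : ∫ x, φ (f x) ∂μ = φ a := by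
      rw [integral_congr_ae (Filter.Eventually.of_forall fun x => by rw [hfa x])]
      simp
    rw [h1, h2]
    simp
  · set g : X → ℝ := fun x => a + b - f x with hgdef
    have hgm : Measurable g := measurable_const.sub hfm
    have hg : ∀ x, g x ∈ Set.Icc a b := fun x =>
      ⟨by simp only [hgdef]; linarith [(hf x).2], by simp only [hgdef]; linarith [(hf x).1]⟩
    have hjensen := jensen_integral_aux μ hlt hφ hgm hg
    have hgint : ∫ x, g x ∂μ = a + b - ∫ x, f x ∂μ := by
      simp only [hgdef]
      rw [integral_sub (integrable_const (a + b)) hfi, integral_const]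
      simp
    rw [hgint] at hjensen
    have hφgi : Integrable (fun x => φ (g x)) μ := integrable_convexOn_comp μ hab hφ hgm hg
    have hmono : ∫ x, φ (g x) ∂μ ≤ ∫ x, (φ a + φ b - φ (f x)) ∂μ :=
      integral_mono hφgi ((integrable_const (φ a + φ b)).sub hφfi) fun x =>
        mercer_pointwise hlt hφ (hf x)
    have hrhs : ∫ x, (φ a + φ b - φ (f x)) ∂μ = φ a + φ b - ∫ x, φ (f x) ∂μ := by
      rw [integral_sub (integrable_const (φ a + φ b)) hφfi, integral_const]
      simp
    rw [hrhs] at hmono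
    exact hjensen.trans hmono
end

section
/- Let μ be a probability measure on a measurable space X and let a ≤ b be real constants. If f : X → [a,b] is a measurable function and φ is a convex function on [a,b], then f and φ ∘ f are μ-integrable and the two-sided estimate φ(∫_X f dμ) ≤ ∫_X (φ ∘ f) dμ ≤ φ(a) + φ(b) − φ(a + b − ∫_X f dμ) holds. -/
open MeasureTheory

section aux
variable {X : Type*} [MeasurableSpace X] (μ : Measure X) [IsProbabilityMeasure μ]

private lemma jtsi_int_f (a b : ℝ) (f : X → ℝ) (hfm : Measurable f)
    (hf : ∀ x, f x ∈ Set.Icc a b) : Integrable f μ := by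
  refine (integrable_const (max |a| |b|)).mono' hfm.aestronglyMeasurable ?_
  exact Filter.Eventually.of_forall fun x => abs_le_max_abs_abs (hf x).1 (hf x).2

private lemma jtsi_int_comp (a b : ℝ) (hab : a ≤ b) (f : X → ℝ) (hfm : Measurable f)
    (hf : ∀ x, f x ∈ Set.Icc a b) (φ : ℝ → ℝ) (hφ : ConvexOn ℝ (Set.Icc a b) φ) :
    Integrable (fun x => φ (f x)) μ := by
  rcases eq_or_lt_of_le hab with rfl | hab
  · have hfa : ∀ x, f x = a := fun x => le_antisymm (hf x).2 (hf x).1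
    have : (fun x => φ (f x)) = fun _ => φ a := funext fun x => by rw [hfa x]
    rw [this]; exact integrable_const _
  -- measurability
  classical
  have hcont : ContinuousOn φ (Set.Ioo a b) := by
    have := hφ.continuousOn_interior
    rwa [interior_Icc] at this
  have hψ : Measurable ((Set.Ioo a b).piecewise φ fun _ => (0 : ℝ)) :=
    hcont.measurable_piecewise continuousOn_const measurableSet_Ioo
  have hrepr : (fun x => φ (f x)) = fun x =>
      (Set.Ioo a b).piecewise φ (fun _ => (0:ℝ)) (f x)
        + (if f x = a then φ a else 0) + (if f x = b then φ b else 0) := by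
    funext x
    rcases eq_or_lt_of_le (hf x).1 with h1 | h1
    · rw [← h1]
      simp [Set.piecewise, lt_irrefl, hab.ne]
    rcases eq_or_lt_of_le (hf x).2 with h2 | h2
    · rw [h2]
      simp [Set.piecewise, lt_irrefl, hab.ne']
    · simp [Set.piecewise, Set.mem_Ioo, h1, h2, h1.ne', h2.ne]
  have hmeas : Measurable fun x => φ (f x) := by
    rw [hrepr]
    refine ((hψ.comp hfm).add ?_).add ?_
    · exact Measurable.ite (hfm (measurableSet_singleton a)) measurable_const measurable_const
    · exact Measurable.ite (hfm (measurableSet_singleton b)) measurable_const measurable_const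
  -- boundedness
  set C₁ : ℝ := max (φ a) (φ b) with hC₁
  set L : ℝ := 2 * φ ((a + b) / 2) - C₁ with hL
  have hub : ∀ y ∈ Set.Icc a b, φ y ≤ C₁ := fun y hy =>
    hφ.le_on_segment (Set.left_mem_Icc.2 hab.le) (Set.right_mem_Icc.2 hab.le)
      ((segment_eq_Icc hab.le) ▸ hy)
  have hlb : ∀ y ∈ Set.Icc a b, L ≤ φ y := by
    intro y hy
    have hy' : a + b - y ∈ Set.Icc a b := by
      constructor <;> [linarith [hy.2]; linarith [hy.1]]
    have hmid : φ ((a + b) / 2) ≤ (1/2 : ℝ) * φ y + (1/2 : ℝ) * φ (a + b - y) := by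
      have h := hφ.2 hy hy' (by norm_num : (0:ℝ) ≤ 1/2) (by norm_num : (0:ℝ) ≤ 1/2)
        (by norm_num : (1/2:ℝ) + 1/2 = 1)
      rw [smul_eq_mul, smul_eq_mul, smul_eq_mul, smul_eq_mul,
        show (1/2:ℝ) * y + 1/2 * (a + b - y) = (a+b)/2 by ring] at h
      exact h
    have := hub _ hy'
    rw [hL]; linarith
  refine (integrable_const (max |C₁| |L|)).mono' hmeas.aestronglyMeasurable ?_
  refine Filter.Eventually.of_forall fun x => ?_
  have h1 := hub _ (hf x); have h2 := hlb _ (hf x)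
  rw [Real.norm_eq_abs, abs_le]
  constructor
  · have : -|L| ≤ L := neg_abs_le L
    exact le_trans (le_trans (neg_le_neg (le_max_right _ _)) this) h2
  · exact le_trans h1 (le_trans (le_abs_self _) (le_max_left _ _))

private lemma jtsi_mean_mem (a b : ℝ) (f : X → ℝ) (hfi : Integrable f μ)
    (hf : ∀ x, f x ∈ Set.Icc a b) : (∫ x, f x ∂μ) ∈ Set.Icc a b := by
  constructor
  · have := integral_mono (integrable_const a) hfi (fun x => (hf x).1)
    simpa using this
  · have := integral_mono hfi (integrable_const b) (fun x => (hf x).2)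
    simpa using this

private lemma jtsi_lower (a b : ℝ) (hab : a ≤ b) (f : X → ℝ)
    (hf : ∀ x, f x ∈ Set.Icc a b) (φ : ℝ → ℝ) (hφ : ConvexOn ℝ (Set.Icc a b) φ)
    (hfi : Integrable f μ) (hφfi : Integrable (fun x => φ (f x)) μ) :
    φ (∫ x, f x ∂μ) ≤ ∫ x, φ (f x) ∂μ := by
  set m : ℝ := ∫ x, f x ∂μ with hm
  have hmem : m ∈ Set.Icc a b := jtsi_mean_mem μ a b f hfi hf
  rcases eq_or_lt_of_le hmem.1 with ha | ha
  · -- m = a : f = a a.e.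
    have hae : f =ᵐ[μ] fun _ => a := by
      have hnn : 0 ≤ fun x => f x - a := fun x => by
        simp only [Pi.zero_apply]; linarith [(hf x).1]
      have hint : Integrable (fun x => f x - a) μ := hfi.sub (integrable_const a)
      have hz : ∫ x, (f x - a) ∂μ = 0 := by
        rw [integral_sub hfi (integrable_const a)]; simp [← hm, ← ha]
      have := (integral_eq_zero_iff_of_nonneg hnn hint).1 hz
      filter_upwards [this] with x hx
      have : f x - a = 0 := hx
      linarith
    have : ∫ x, φ (f x) ∂μ = φ a := by
      have hc : (fun x => φ (f x)) =ᵐ[μ] fun _ => φ a :=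
        hae.mono fun x hx => by simp only [hx]
      rw [integral_congr_ae hc]; simp
    rw [this, ← ha]
  rcases eq_or_lt_of_le hmem.2 with hb | hb
  · -- m = b
    have hae : f =ᵐ[μ] fun _ => b := by
      have hnn : 0 ≤ fun x => b - f x := fun x => by
        simp only [Pi.zero_apply]; linarith [(hf x).2]
      have hint : Integrable (fun x => b - f x) μ := (integrable_const b).sub hfi
      have hz : ∫ x, (b - f x) ∂μ = 0 := by
        rw [integral_sub (integrable_const b) hfi]; simp [← hm, hb]
      have := (integral_eq_zero_iff_of_nonneg hnn hint).1 hz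
      filter_upwards [this] with x hx
      have : b - f x = 0 := hx
      linarith
    have : ∫ x, φ (f x) ∂μ = φ b := by
      have hc : (fun x => φ (f x)) =ᵐ[μ] fun _ => φ b :=
        hae.mono fun x hx => by simp only [hx]
      rw [integral_congr_ae hc]; simp
    rw [this, hb]
  -- a < m < b : supporting line at m
  set S : Set ℝ := (fun y => (φ y - φ m) / (y - m)) '' Set.Ico a m with hS
  have hne : S.Nonempty := ⟨_, a, ⟨le_refl a, ha⟩, rfl⟩
  have hbdd : BddAbove S := by
    refine ⟨(φ b - φ m) / (b - m), ?_⟩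
    rintro _ ⟨y, ⟨hy1, hy2⟩, rfl⟩
    have := hφ.slope_mono_adjacent ⟨hy1, (hy2.trans hb).le⟩ (Set.right_mem_Icc.2 hab)
      hy2 hb
    calc (φ y - φ m) / (y - m) = (φ m - φ y) / (m - y) := by
          rw [div_eq_div_iff (by linarith) (by linarith)]; ring
      _ ≤ (φ b - φ m) / (b - m) := this
  set c : ℝ := sSup S with hc
  have key : ∀ y ∈ Set.Icc a b, φ m + c * (y - m) ≤ φ y := by
    intro y hy
    rcases lt_trichotomy y m with hlt | heq | hgt
    · have hmem' : (φ y - φ m) / (y - m) ∈ S := ⟨y, ⟨hy.1, hlt⟩, rfl⟩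
      have hcge : (φ y - φ m) / (y - m) ≤ c := le_csSup hbdd hmem'
      have hne0 : y - m ≠ 0 := by linarith
      have := mul_le_mul_of_nonpos_right hcge (by linarith : y - m ≤ 0)
      rw [div_mul_cancel₀ _ hne0] at this
      linarith
    · rw [heq]; simp
    · have hcle : c ≤ (φ y - φ m) / (y - m) := by
        refine csSup_le hne ?_
        rintro _ ⟨z, ⟨hz1, hz2⟩, rfl⟩
        have := hφ.slope_mono_adjacent ⟨hz1, (hz2.trans hgt).le.trans hy.2⟩ hy hz2 hgt
        calc (φ z - φ m) / (z - m) = (φ m - φ z) / (m - z) := by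
              rw [div_eq_div_iff (by linarith) (by linarith)]; ring
          _ ≤ (φ y - φ m) / (y - m) := this
      have hne0 : y - m ≠ 0 := by linarith
      have := mul_le_mul_of_nonneg_right hcle (by linarith : (0:ℝ) ≤ y - m)
      rw [div_mul_cancel₀ _ hne0] at this
      linarith
  have hsub : Integrable (fun x => f x - m) μ := hfi.sub (integrable_const m)
  have hsubc : Integrable (fun x => c * (f x - m)) μ := hsub.const_mul c
  have hgint : Integrable (fun x => φ m + c * (f x - m)) μ :=
    (integrable_const (φ m)).add hsubc
  have hmono := integral_mono hgint hφfi (fun x => key (f x) (hf x))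
  have hcalc : ∫ x, (φ m + c * (f x - m)) ∂μ = φ m := by
    rw [integral_add (integrable_const _) hsubc,
      integral_const_mul, integral_sub hfi (integrable_const m)]
    simp [← hm]
  rwa [hcalc] at hmono

end aux

/-- Two-sided Jensen estimate: if `μ` is a probability measure on `X`, `a ≤ b`,
`f : X → [a,b]` is measurable, and `φ` is convex on `[a,b]`, then `f` and `φ ∘ f` are
`μ`-integrable and
`φ(∫ f dμ) ≤ ∫ φ ∘ f dμ ≤ φ(a) + φ(b) − φ(a + b − ∫ f dμ)`. -/
theorem jensen_two_sided_integral
    {X : Type*} [MeasurableSpace X] (μ : Measure X) [IsProbabilityMeasure μ]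
    (a b : ℝ) (hab : a ≤ b)
    (f : X → ℝ) (hfm : Measurable f) (hf : ∀ x, f x ∈ Set.Icc a b)
    (φ : ℝ → ℝ) (hφ : ConvexOn ℝ (Set.Icc a b) φ) :
    Integrable f μ ∧ Integrable (φ ∘ f) μ ∧
      φ (∫ x, f x ∂μ) ≤ ∫ x, φ (f x) ∂μ ∧
      ∫ x, φ (f x) ∂μ ≤ φ a + φ b - φ (a + b - ∫ x, f x ∂μ) := by
  have hfi : Integrable f μ := jtsi_int_f μ a b f hfm hf
  have hφfi : Integrable (fun x => φ (f x)) μ := jtsi_int_comp μ a b hab f hfm hf φ hφ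
  have hlow : φ (∫ x, f x ∂μ) ≤ ∫ x, φ (f x) ∂μ := jtsi_lower μ a b hab f hf φ hφ hfi hφfi
  refine ⟨hfi, hφfi, hlow, ?_⟩
  -- upper bound, via g = a + b - f
  set g : X → ℝ := fun x => a + b - f x with hg
  have hgm : Measurable g := measurable_const.sub hfm
  have hgmem : ∀ x, g x ∈ Set.Icc a b := fun x =>
    ⟨by have := (hf x).2; simp only [hg]; linarith, by have := (hf x).1; simp only [hg]; linarith⟩
  have hgi : Integrable g μ := (integrable_const (a + b)).sub hfi
  have hφgi : Integrable (fun x => φ (g x)) μ := jtsi_int_comp μ a b hab g hgm hgmem φ hφ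
  have hglow : φ (∫ x, g x ∂μ) ≤ ∫ x, φ (g x) ∂μ := jtsi_lower μ a b hab g hgmem φ hφ hgi hφgi
  have hgint : ∫ x, g x ∂μ = a + b - ∫ x, f x ∂μ := by
    simp only [hg]
    rw [integral_sub (integrable_const _) hfi]
    simp
  -- pointwise: φ y + φ (a+b-y) ≤ φ a + φ b
  have hpt : ∀ y ∈ Set.Icc a b, φ y + φ (a + b - y) ≤ φ a + φ b := by
    intro y hy
    rcases eq_or_lt_of_le hab with rfl | hab'
    · have h1 : y = a := le_antisymm hy.2 hy.1
      rw [h1, show a + a - a = a by ring]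
    · set t : ℝ := (b - y) / (b - a) with ht
      have hba : (0:ℝ) < b - a := by linarith
      have ht0 : 0 ≤ t := div_nonneg (by linarith [hy.2]) hba.le
      have ht1 : t ≤ 1 := by
        rw [ht, div_le_one hba]; linarith [hy.1]
      have hsum : t + (1 - t) = 1 := by ring
      have hyeq : y = t * a + (1 - t) * b := by
        rw [ht]; field_simp [hba.ne']; ring
      have hyeq' : a + b - y = (1 - t) * a + t * b := by
        rw [ht]; field_simp [hba.ne']; ring
      have h1 := hφ.2 (Set.left_mem_Icc.2 hab) (Set.right_mem_Icc.2 hab) ht0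
        (by linarith : (0:ℝ) ≤ 1 - t) hsum
      have h2 := hφ.2 (Set.left_mem_Icc.2 hab) (Set.right_mem_Icc.2 hab)
        (by linarith : (0:ℝ) ≤ 1 - t) ht0 (by ring : (1 - t) + t = 1)
      rw [smul_eq_mul, smul_eq_mul, smul_eq_mul, smul_eq_mul] at h1 h2
      rw [← hyeq] at h1
      rw [← hyeq'] at h2
      linarith
  have hsum : ∫ x, φ (f x) ∂μ + ∫ x, φ (g x) ∂μ ≤ φ a + φ b := by
    rw [← integral_add hφfi hφgi]
    have := integral_mono (hφfi.add hφgi) (integrable_const (φ a + φ b))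
      (fun x => hpt (f x) (hf x))
    simpa using this
  have := hglow
  rw [hgint] at this
  linarith
end
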